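/- Let ⟨·⟩₀ be a symmetric function assigning a rational number to each finite multiset {d₁,…,dₙ} of nonnegative integers with n ≥ 3, satisfying the string equation ⟨0, d₁,…,dₙ⟩₀ = Σ_{j : d_j ≥ 1} ⟨d₁,…,d_j − 1,…,dₙ⟩₀ for n ≥ 3, the normalization ⟨0,0,0⟩₀ = 1, and the vanishing ⟨d₁,…,dₙ⟩₀ = 0 unless d₁ + ⋯ + dₙ = n − 3. Then for all n ≥ 3 and all d₁,…,dₙ ≥ 0 with d₁ + ⋯ + dₙ = n − 3, one has ⟨d₁,…,dₙ⟩₀ = (n−3)! / (d₁!·d₂!⋯dₙ!). -/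

import Mathlib

/-- Genus-zero ψ-intersection numbers: a function on multisets of
nonnegative integers satisfying the string equation, ⟨0,0,0⟩₀ = 1, and vanishing
off the dimension constraint is given by the multinomial formula
⟨d₁,…,dₙ⟩₀ = (n−3)!/(d₁!⋯dₙ!) when d₁+⋯+dₙ = n−3. -/
theorem stmt4 (I : Multiset ℕ → ℚ)
    (hstring : ∀ s : Multiset ℕ, 3 ≤ s.card →
      I (0 ::ₘ s) =
        (s.map (fun d => if 1 ≤ d then I ((d - 1) ::ₘ s.erase d) else 0)).sum)
    (hnorm : I {0, 0, 0} = 1)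
    (hvan : ∀ s : Multiset ℕ, 3 ≤ s.card → s.sum ≠ s.card - 3 → I s = 0) :
    ∀ s : Multiset ℕ, 3 ≤ s.card → s.sum = s.card - 3 →
      I s = (Nat.factorial (s.card - 3) : ℚ) / ((s.map Nat.factorial).prod : ℕ) := by
  suffices h : ∀ n : ℕ, ∀ s : Multiset ℕ, s.card = n → 3 ≤ s.card → s.sum = s.card - 3 →
      I s = (Nat.factorial (s.card - 3) : ℚ) / ((s.map Nat.factorial).prod : ℕ) by
    intro s h1 h2; exact h s.card s rfl h1 h2
  intro n
  induction n with
  | zero => intro s hc h3; omega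
  | succ n IH =>
    intro s hc h3 hsum
    rcases Nat.lt_or_ge n 3 with hn | hn
    · -- base case: card = 3, sum = 0, so s = {0,0,0}
      have hn3 : n + 1 = 3 := by omega
      have hs0 : s.sum = 0 := by omega
      have : s = Multiset.replicate 3 0 := by
        rw [Multiset.eq_replicate]
        constructor
        · omega
        · intro b hb
          by_contra hb0
          have h1b : 1 ≤ b := by omega
          have := Multiset.le_sum_of_mem hb  -- maybe not exists
          omega
      subst this
      simp only [Multiset.map_replicate, Nat.factorial_zero, Multiset.prod_replicate]
      have : ({0, 0, 0} : Multiset ℕ) = Multiset.replicate 3 0 := rfl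
      rw [← this, hnorm]
      norm_num
    · -- inductive step
      have hcard : s.card = n + 1 := hc
      have hssum : s.sum = n - 2 := by omega
      have h0 : (0 : ℕ) ∈ s := by
        by_contra h0
        have hall : ∀ x ∈ s, 1 ≤ x := by
          intro x hx; rcases Nat.eq_zero_or_pos x with rfl | h; exact absurd hx h0; exact h
        have := Multiset.card_nsmul_le_sum hall
        simp only [smul_eq_mul, mul_one] at this
        omega
      set t := s.erase 0 with ht
      have hst : s = 0 ::ₘ t := (Multiset.cons_erase h0).symm
      have htc : t.card = n := by
        have := Multiset.card_erase_of_mem h0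
        simp only [← ht, Nat.pred_eq_sub_one] at this
        omega
      have hts : t.sum = n - 2 := by
        have : s.sum = 0 + t.sum := by rw [hst, Multiset.sum_cons]
        omega
      have ht3 : 3 ≤ t.card := by omega
      rw [hst, hstring t ht3]
      set P : ℕ := (t.map Nat.factorial).prod with hP
      have hPpos : 0 < P := by
        rw [hP]
        apply Multiset.prod_pos
        intro x hx
        rcases Multiset.mem_map.mp hx with ⟨d, _, rfl⟩
        exact Nat.factorial_pos d
      have hPne : (P : ℚ) ≠ 0 := by positivity
      have key : (t.map (fun d => if 1 ≤ d then I ((d - 1) ::ₘ t.erase d) else 0)).sum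
          = (t.map (fun d : ℕ => (d : ℚ) * ((Nat.factorial (n - 3) : ℚ) / P))).sum := by
        apply congrArg
        apply Multiset.map_congr rfl
        intro d hd
        rcases Nat.eq_zero_or_pos d with rfl | hd1
        · simp
        · rw [if_pos (show 1 ≤ d from hd1)]
          set u := (d - 1) ::ₘ t.erase d with hu
          have hdu : d ::ₘ t.erase d = t := Multiset.cons_erase hd
          have hed : d + (t.erase d).sum = t.sum := by
            rw [← Multiset.sum_cons, hdu]
          have hec : (t.erase d).card = n - 1 := by
            have := Multiset.card_erase_of_mem hd
            rw [Nat.pred_eq_sub_one] at this; omega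
          have huc : u.card = n := by
            rw [hu, Multiset.card_cons]; omega
          have hus : u.sum = n - 3 := by
            rw [hu, Multiset.sum_cons]; omega
          have hIH := IH u huc (by omega) (by omega)
          rw [huc] at hIH
          rw [hIH]
          -- now compute the denominator
          have hQ : (u.map Nat.factorial).prod = (d - 1).factorial * ((t.erase d).map Nat.factorial).prod := by
            rw [hu, Multiset.map_cons, Multiset.prod_cons]
          have hPQ : P = d.factorial * ((t.erase d).map Nat.factorial).prod := by
            conv_lhs => rw [hP, ← hdu]
            rw [Multiset.map_cons, Multiset.prod_cons]
          set Q := ((t.erase d).map Nat.factorial).prod with hQdef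
          have hQpos : 0 < Q := by
            apply Multiset.prod_pos
            intro x hx
            rcases Multiset.mem_map.mp hx with ⟨e, _, rfl⟩
            exact Nat.factorial_pos e
          have hfact : d.factorial = d * (d - 1).factorial := by
            conv_lhs => rw [show d = (d - 1) + 1 by omega]
            rw [Nat.factorial_succ]
            congr 1
            omega
          rw [hQ, hPQ, hfact]
          have h1 : ((d - 1).factorial : ℚ) ≠ 0 := by positivity
          have h2 : (Q : ℚ) ≠ 0 := by positivity
          have h3 : (d : ℚ) ≠ 0 := by positivity
          push_cast
          field_simp
      rw [key, Multiset.sum_map_mul_right, ← Nat.cast_multiset_sum, hts]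
      have hcard0 : (0 ::ₘ t).card = n + 1 := by rw [Multiset.card_cons]; omega
      rw [hcard0]
      have hprod0 : ((0 ::ₘ t).map Nat.factorial).prod = P := by
        rw [Multiset.map_cons, Multiset.prod_cons, Nat.factorial_zero, one_mul]
      rw [hprod0]
      have hfn : (n + 1 - 3).factorial = (n - 2) * (n - 3).factorial := by
        have : n + 1 - 3 = (n - 3) + 1 := by omega
        rw [this, Nat.factorial_succ]
        congr 1
        omega
      rw [hfn]
      push_cast
      field_simp
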